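/- Let a : ℝ^n → ℝ be continuous with a(x) ≠ 0 for every x. Then there exists a class K∞ function ρ̄ such that 1/|a(x)| ≤ ρ̄(|x|) + 1/|a(0)| for all x ∈ ℝ^n. -/

import Mathlib

/-- A class `K∞` function: continuous, strictly increasing on `[0,∞)`,
vanishing at `0`, and unbounded. -/
def ClassKInf (ρ : ℝ → ℝ) : Prop :=
  ContinuousOn ρ (Set.Ici 0) ∧ StrictMonoOn ρ (Set.Ici 0) ∧ ρ 0 = 0 ∧
    ∀ M : ℝ, ∃ s : ℝ, 0 ≤ s ∧ M < ρ s

theorem exists_classKInf_bound_inv_abs (n : ℕ)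
    (a : EuclideanSpace ℝ (Fin n) → ℝ) (ha : Continuous a)
    (ha0 : ∀ x, a x ≠ 0) :
    ∃ ρ : ℝ → ℝ, ClassKInf ρ ∧ ∀ x, 1 / |a x| ≤ ρ ‖x‖ + 1 / |a 0| := by
  set f : EuclideanSpace ℝ (Fin n) → ℝ := fun x => 1 / |a x| with hfdef
  have hf : Continuous f :=
    continuous_const.div ha.abs (fun x => abs_ne_zero.2 (ha0 x))
  have hf0 : ∀ x, 0 ≤ f x := fun x => by positivity
  set M : ℝ → ℝ := fun r => sSup (f '' Metric.closedBall (0 : EuclideanSpace ℝ (Fin n)) r) with hMdef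
  have bdd : ∀ r : ℝ, BddAbove (f '' Metric.closedBall (0 : EuclideanSpace ℝ (Fin n)) r) :=
    fun r => ((isCompact_closedBall (0 : EuclideanSpace ℝ (Fin n)) r).image hf).bddAbove
  have hle : ∀ (x : EuclideanSpace ℝ (Fin n)) (r : ℝ), ‖x‖ ≤ r → f x ≤ M r := fun x r hx =>
    le_csSup (bdd r) ⟨x, by simpa [mem_closedBall_zero_iff] using hx, rfl⟩
  have hub : ∀ (r C : ℝ), 0 ≤ C → (∀ x : EuclideanSpace ℝ (Fin n), ‖x‖ ≤ r → f x ≤ C) → M r ≤ C := by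
    intro r C hC h
    refine Real.sSup_le ?_ hC
    rintro y ⟨x, hx, rfl⟩
    exact h x (by simpa [mem_closedBall_zero_iff] using hx)
  have hMnonneg : ∀ r, 0 ≤ M r := by
    intro r
    rcases lt_or_ge r 0 with hr | hr
    · simp [hMdef, Metric.closedBall_eq_empty.2 hr, Real.sSup_empty]
    · exact le_trans (hf0 0) (hle 0 r (by simpa using hr))
  have hMmono : Monotone M := by
    intro r1 r2 h
    rcases lt_or_ge r1 0 with hr | hr
    · simpa [hMdef, Metric.closedBall_eq_empty.2 hr, Real.sSup_empty] using hMnonneg r2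
    · refine csSup_le_csSup (bdd r2) ⟨f 0, ⟨0, by simpa using hr, rfl⟩⟩
        (Set.image_mono (f := f) (Metric.closedBall_subset_closedBall h))
  have hM0 : M 0 = f 0 := by
    simp [hMdef, Metric.closedBall_zero]
  -- the averaged majorant
  set A : ℝ → ℝ := fun r => ∫ t in (0:ℝ)..1, M (r * t + r) with hAdef
  have hcomp : ∀ r : ℝ, 0 ≤ r → Monotone (fun t : ℝ => M (r * t + r)) := by
    intro r hr t1 t2 h
    exact hMmono (by nlinarith)
  have hint : ∀ r : ℝ, 0 ≤ r →
      IntervalIntegrable (fun t : ℝ => M (r * t + r)) MeasureTheory.volume 0 1 :=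
    fun r hr => (hcomp r hr).intervalIntegrable
  have hA0 : A 0 = M 0 := by
    simp [hAdef]
  have hAlower : ∀ r : ℝ, 0 ≤ r → M r ≤ A r := by
    intro r hr
    have : (∫ t in (0:ℝ)..1, M r) ≤ A r := by
      refine intervalIntegral.integral_mono_on zero_le_one
        intervalIntegrable_const (hint r hr) ?_
      intro t ht
      exact hMmono (by nlinarith [ht.1])
    simpa using this
  have hAupper : ∀ r : ℝ, 0 ≤ r → A r ≤ M (2 * r) := by
    intro r hr
    have : A r ≤ ∫ t in (0:ℝ)..1, M (2 * r) := by
      refine intervalIntegral.integral_mono_on zero_le_one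
        (hint r hr) intervalIntegrable_const ?_
      intro t ht
      exact hMmono (by nlinarith [ht.2])
    simpa using this
  have hAmono : MonotoneOn A (Set.Ici 0) := by
    intro r1 h1 r2 h2 h
    refine intervalIntegral.integral_mono_on zero_le_one (hint r1 h1) (hint r2 h2) ?_
    intro t ht
    exact hMmono (by nlinarith [ht.1, Set.mem_Ici.1 h1])
  -- continuity of A on [0, ∞)
  have hMint : ∀ u v : ℝ, IntervalIntegrable M MeasureTheory.volume u v :=
    fun u v => hMmono.intervalIntegrable
  set H : ℝ → ℝ := fun b => ∫ t in (0:ℝ)..b, M t with hHdef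
  have hH : Continuous H := intervalIntegral.continuous_primitive hMint 0
  have hAeq : ∀ r : ℝ, 0 < r → A r = r⁻¹ * (H (2 * r) - H r) := by
    intro r hr
    have h1 : A r = r⁻¹ • ∫ x in (r * 0 + r)..(r * 1 + r), M x :=
      intervalIntegral.integral_comp_mul_add M (ne_of_gt hr) r
    have h2 : H (2 * r) - H r = ∫ x in r..(2 * r), M x :=
      intervalIntegral.integral_interval_sub_left (hMint 0 (2 * r)) (hMint 0 r)
    rw [show r * 0 + r = r by ring, show r * 1 + r = 2 * r by ring] at h1
    rw [h1, h2, smul_eq_mul]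
  have hAcont : ContinuousOn A (Set.Ici 0) := by
    intro r0 hr0
    rcases eq_or_lt_of_le (Set.mem_Ici.1 hr0) with hr0' | hr0'
    · -- continuity at 0 from the right
      subst hr0'
      rw [Metric.continuousWithinAt_iff]
      intro ε hε
      obtain ⟨δ, hδ, hδ'⟩ := Metric.continuousAt_iff.1
        (hf.continuousAt (x := (0 : EuclideanSpace ℝ (Fin n)))) (ε / 2) (by linarith)
      refine ⟨δ / 4, by linarith, ?_⟩
      intro r hr hrδ
      have hr' : 0 ≤ r := hr
      rw [Real.dist_eq, sub_zero, abs_of_nonneg hr'] at hrδ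
      have hup : M (2 * r) ≤ f 0 + ε / 2 := by
        refine hub (2 * r) (f 0 + ε / 2) (by linarith [hf0 (0 : EuclideanSpace ℝ (Fin n))]) ?_
        intro x hx
        have : dist x 0 < δ := by
          rw [dist_zero_right]
          linarith
        have h5 := hδ' this
        rw [Real.dist_eq] at h5
        have := abs_lt.1 h5
        linarith [this.1, this.2]
      have hlow : f 0 ≤ A r := by
        rw [← hM0]
        exact le_trans (hMmono hr') (hAlower r hr')
      have hhigh : A r ≤ f 0 + ε / 2 := le_trans (hAupper r hr') hup
      rw [hA0, hM0, Real.dist_eq, abs_lt]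
      constructor <;> linarith
    · -- continuity at interior points
      have hB : ContinuousAt (fun r => r⁻¹ * (H (2 * r) - H r)) r0 := by
        exact (continuousAt_inv₀ (ne_of_gt hr0')).mul
          (((hH.comp (continuous_const.mul continuous_id)).sub hH).continuousAt)
      refine (hB.continuousWithinAt).congr_of_eventuallyEq ?_ (hAeq r0 hr0')
      have hmem : Set.Ioi (0:ℝ) ∈ nhdsWithin r0 (Set.Ici 0) :=
        mem_nhdsWithin_of_mem_nhds (isOpen_Ioi.mem_nhds hr0')
      filter_upwards [hmem] with r hr
      exact hAeq r hr
  refine ⟨fun r => r + (A r - M 0), ⟨?_, ?_, ?_, ?_⟩, ?_⟩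
  · exact continuousOn_id.add (hAcont.sub continuousOn_const)
  · intro r1 h1 r2 h2 h
    have := hAmono h1 h2 h.le
    simp only
    linarith
  · simp [hA0]
  · intro MM
    refine ⟨max MM 0 + 1, by positivity, ?_⟩
    have h0 : (0:ℝ) ≤ max MM 0 + 1 := by positivity
    have h1 : M 0 ≤ M (max MM 0 + 1) := hMmono h0
    have h2 : M (max MM 0 + 1) ≤ A (max MM 0 + 1) := hAlower _ h0
    have h3 : MM ≤ max MM 0 := le_max_left _ _
    simp only
    linarith
  · intro x
    have h1 : 1 / |a x| ≤ M ‖x‖ := hle x ‖x‖ le_rfl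
    have h2 : M ‖x‖ ≤ A ‖x‖ := hAlower _ (norm_nonneg x)
    have h3 : (1:ℝ) / |a 0| = M 0 := by rw [hM0]
    have h4 : (0:ℝ) ≤ ‖x‖ := norm_nonneg x
    show 1 / |a x| ≤ ‖x‖ + (A ‖x‖ - M 0) + 1 / |a 0|
    rw [h3]
    linarith
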